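/- For the discontinuous Galerkin discrete derivative operators D_h^+ and D_h^- on a periodic mesh (defined with upwind-type one-sided fluxes φ^+ and φ^- respectively), one has the adjoint relation (D_h^+ φ, ψ) = −(φ, D_h^- ψ) for all φ, ψ in the piecewise polynomial space U_h^r, i.e. D_h^+ = −(D_h^-)^T. -/

import Mathlib

open Finset intervalIntegral

/-- The DG bilinear form `(𝒟_h^- φ, ψ)` on a periodic mesh of `N` cells with nodes
`a 0 < a 1 < … < a N` (periodically identified): piecewise polynomials are encoded by
their polynomial restriction on each cell; the flux is the left trace `φ⁻`. -/
noncomputable def dgBminus (N : ℕ) [NeZero N] (a : ℕ → ℝ) (φ ψ : Fin N → Polynomial ℝ) : ℝ :=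
  -(∑ j : Fin N, ∫ x in a (j : ℕ)..a ((j : ℕ) + 1), (φ j).eval x * ((ψ j).derivative.eval x))
    - ∑ j : Fin N, (φ (j - 1)).eval (a (((j - 1 : Fin N) : ℕ) + 1)) *
        ((ψ j).eval (a (j : ℕ)) - (ψ (j - 1)).eval (a (((j - 1 : Fin N) : ℕ) + 1)))

/-- The DG bilinear form `(𝒟_h^+ φ, ψ)`, with the flux being the right trace `φ⁺`. -/
noncomputable def dgBplus (N : ℕ) [NeZero N] (a : ℕ → ℝ) (φ ψ : Fin N → Polynomial ℝ) : ℝ :=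
  -(∑ j : Fin N, ∫ x in a (j : ℕ)..a ((j : ℕ) + 1), (φ j).eval x * ((ψ j).derivative.eval x))
    - ∑ j : Fin N, (φ j).eval (a (j : ℕ)) *
        ((ψ j).eval (a (j : ℕ)) - (ψ (j - 1)).eval (a (((j - 1 : Fin N) : ℕ) + 1)))

/-- Adjoint relation for the DG derivative operators on a periodic mesh:
`(𝒟_h^+ φ, ψ) = −(φ, 𝒟_h^- ψ)`, i.e. `𝒟_h^+ = −(𝒟_h^-)ᵀ`. -/
theorem stmt_6 (N : ℕ) [NeZero N] (a : ℕ → ℝ) (ha : StrictMonoOn a (Set.Iic N))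
    (φ ψ : Fin N → Polynomial ℝ) :
    dgBplus N a φ ψ = -(dgBminus N a ψ φ) := by
  unfold dgBplus dgBminus
  have key : ∀ j : Fin N,
      (∫ x in a (j:ℕ)..a ((j:ℕ)+1), (φ j).eval x * ((ψ j).derivative.eval x))
      + (∫ x in a (j:ℕ)..a ((j:ℕ)+1), (ψ j).eval x * ((φ j).derivative.eval x))
      = (φ j).eval (a ((j:ℕ)+1)) * (ψ j).eval (a ((j:ℕ)+1))
        - (φ j).eval (a (j:ℕ)) * (ψ j).eval (a (j:ℕ)) := by
    intro j
    have : (∫ x in a (j:ℕ)..a ((j:ℕ)+1), (φ j).eval x * ((ψ j).derivative.eval x))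
        + (∫ x in a (j:ℕ)..a ((j:ℕ)+1), (ψ j).eval x * ((φ j).derivative.eval x))
        = (φ j * ψ j).eval (a ((j:ℕ)+1)) - (φ j * ψ j).eval (a (j:ℕ)) := by
      rw [← intervalIntegral.integral_eq_sub_of_hasDerivAt (fun t _ => (φ j * ψ j).hasDerivAt t)
          (((φ j * ψ j).derivative.continuous).intervalIntegrable _ _),
        ← intervalIntegral.integral_add (f := fun x => (φ j).eval x * ((ψ j).derivative.eval x))
          (g := fun x => (ψ j).eval x * ((φ j).derivative.eval x))
          (((φ j).continuous.mul ((ψ j).derivative.continuous)).intervalIntegrable _ _)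
          (((ψ j).continuous.mul ((φ j).derivative.continuous)).intervalIntegrable _ _)]
      refine intervalIntegral.integral_congr fun t _ => ?_
      simp [Polynomial.derivative_mul]
      ring
    simpa using this
  have hkey : (∑ j : Fin N, ∫ x in a (j:ℕ)..a ((j:ℕ)+1), (φ j).eval x * ((ψ j).derivative.eval x))
      + (∑ j : Fin N, ∫ x in a (j:ℕ)..a ((j:ℕ)+1), (ψ j).eval x * ((φ j).derivative.eval x))
      = (∑ j : Fin N, (φ j).eval (a ((j:ℕ)+1)) * (ψ j).eval (a ((j:ℕ)+1)))
        - ∑ j : Fin N, (φ j).eval (a (j:ℕ)) * (ψ j).eval (a (j:ℕ)) := by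
    rw [← Finset.sum_add_distrib, ← Finset.sum_sub_distrib]
    exact Finset.sum_congr rfl fun j _ => key j
  have hre : (∑ j : Fin N, (φ (j-1)).eval (a (((j - 1 : Fin N):ℕ)+1)) *
        (ψ (j-1)).eval (a (((j - 1 : Fin N):ℕ)+1)))
      = ∑ j : Fin N, (φ j).eval (a ((j:ℕ)+1)) * (ψ j).eval (a ((j:ℕ)+1)) :=
    Fintype.sum_equiv (Equiv.subRight (1 : Fin N)) _ _ (fun j => rfl)
  simp only [mul_sub, sub_mul, Finset.sum_sub_distrib] at *
  have hc : ∀ j : Fin N, (ψ (j-1)).eval (a (((j - 1 : Fin N):ℕ)+1)) * (φ j).eval (a (j:ℕ))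
      = (φ j).eval (a (j:ℕ)) * (ψ (j-1)).eval (a (((j - 1 : Fin N):ℕ)+1)) := fun j => mul_comm _ _
  rw [Finset.sum_congr rfl (fun j _ => hc j)] at *
  have hc2 : ∀ j : Fin N, (ψ (j-1)).eval (a (((j - 1 : Fin N):ℕ)+1)) * (φ (j-1)).eval (a (((j - 1 : Fin N):ℕ)+1))
      = (φ (j-1)).eval (a (((j - 1 : Fin N):ℕ)+1)) * (ψ (j-1)).eval (a (((j - 1 : Fin N):ℕ)+1)) := fun j => mul_comm _ _
  rw [Finset.sum_congr rfl (fun j _ => hc2 j)]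
  linarith [hkey, hre]
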